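/- Let X be a compact metric space and (γ_n) a sequence of maps γ_n : X → X such that sup_n Lip(γ_n) < 1. Then there exists x* ∈ X such that for every x ∈ X, the compositions γ_1 ∘ γ_2 ∘ ⋯ ∘ γ_n (x) converge to x* as n → ∞. -/
import Mathlib


/-- `leftComp f n = f 1 ∘ f 2 ∘ ⋯ ∘ f n` (applying `f n` first and `f 1` last). -/
def leftComp {α : Type*} (f : ℕ → α → α) : ℕ → α → α
  | 0 => id
  | n + 1 => leftComp f n ∘ f (n + 1)

theorem stmt0 {X : Type*} [MetricSpace X] [CompactSpace X] [Nonempty X]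
    (γ : ℕ → X → X) (c : ℝ) (hc : c < 1)
    (hLip : ∀ n x y, dist (γ n x) (γ n y) ≤ c * dist x y) :
    ∃ xs : X, ∀ x : X,
      Filter.Tendsto (fun n => leftComp γ n x) Filter.atTop (nhds xs) := by
  set c' : ℝ := max c 0 with hc'def
  have hc'0 : 0 ≤ c' := le_max_right _ _
  have hc'1 : c' < 1 := max_lt hc one_pos
  have hLip' : ∀ n x y, dist (γ n x) (γ n y) ≤ c' * dist x y := fun n x y =>
    (hLip n x y).trans (mul_le_mul_of_nonneg_right (le_max_left _ _) dist_nonneg)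
  have lipn : ∀ n (x y : X), dist (leftComp γ n x) (leftComp γ n y) ≤ c' ^ n * dist x y := by
    intro n
    induction n with
    | zero => intro x y; simp [leftComp]
    | succ n ih =>
      intro x y
      calc dist (leftComp γ (n+1) x) (leftComp γ (n+1) y)
          = dist (leftComp γ n (γ (n+1) x)) (leftComp γ n (γ (n+1) y)) := rfl
        _ ≤ c' ^ n * dist (γ (n+1) x) (γ (n+1) y) := ih _ _
        _ ≤ c' ^ n * (c' * dist x y) :=
            mul_le_mul_of_nonneg_left (hLip' _ _ _) (pow_nonneg hc'0 n)
        _ = c' ^ (n+1) * dist x y := by ring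
  have hb : Bornology.IsBounded (Set.univ : Set X) := isCompact_univ.isBounded
  set D : ℝ := Metric.diam (Set.univ : Set X) with hDdef
  have hD : ∀ a b : X, dist a b ≤ D := fun a b =>
    Metric.dist_le_diam_of_mem hb (Set.mem_univ _) (Set.mem_univ _)
  obtain ⟨x₀⟩ := ‹Nonempty X›
  set u : ℕ → X := fun n => leftComp γ n x₀ with hudef
  have hcauchy : CauchySeq u := by
    apply cauchySeq_of_le_geometric c' D hc'1
    intro n
    calc dist (u n) (u (n+1))
        = dist (leftComp γ n x₀) (leftComp γ n (γ (n+1) x₀)) := rfl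
      _ ≤ c' ^ n * dist x₀ (γ (n+1) x₀) := lipn n _ _
      _ ≤ c' ^ n * D := mul_le_mul_of_nonneg_left (hD _ _) (pow_nonneg hc'0 n)
      _ = D * c' ^ n := mul_comm _ _
  obtain ⟨xs, hxs⟩ := cauchySeq_tendsto_of_complete hcauchy
  refine ⟨xs, fun x => ?_⟩
  rw [tendsto_iff_dist_tendsto_zero]
  have hbound : ∀ n, dist (leftComp γ n x) xs ≤ c' ^ n * D + dist (u n) xs := by
    intro n
    calc dist (leftComp γ n x) xs ≤ dist (leftComp γ n x) (u n) + dist (u n) xs :=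
          dist_triangle _ _ _
      _ ≤ c' ^ n * D + dist (u n) xs := by
          gcongr
          exact (lipn n _ _).trans (mul_le_mul_of_nonneg_left (hD _ _) (pow_nonneg hc'0 n))
  have hlim : Filter.Tendsto (fun n => c' ^ n * D + dist (u n) xs) Filter.atTop (nhds 0) := by
    have h1 : Filter.Tendsto (fun n => c' ^ n * D) Filter.atTop (nhds 0) := by
      simpa using (tendsto_pow_atTop_nhds_zero_of_lt_one hc'0 hc'1).mul_const D
    have h2 : Filter.Tendsto (fun n => dist (u n) xs) Filter.atTop (nhds 0) :=
      tendsto_iff_dist_tendsto_zero.mp hxs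
    simpa using h1.add h2
  exact squeeze_zero (fun n => dist_nonneg) hbound hlim
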